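/- Let Λ be a finite label set and let L be ANY set of trees over Λ (not assumed to be a regular tree language). Then the set B_L' = { X # Y | X and Y are trees over Λ and the pair (X, Y) is L-semibad } is a regular tree language over Option Λ. (The proof uses Kruskal's tree theorem: trees over a finite label set are well-quasi-ordered by topological containment.) -/

import Mathlib

/-- A finite rooted labeled binary tree over label set `Λ`. -/
inductive LTree (Λ : Type) : Type
  | leaf : Λ → LTree Λ
  | node : Λ → LTree Λ → LTree Λ → LTree Λ

/-- Topological containment of rooted labeled binary trees: the least relation such that
(i) `leaf a ≼ leaf a`; (ii) `leaf a ≼ node a T₁ T₂`; (iii) if `U ≼ T₁` or `U ≼ T₂` then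
`U ≼ node b T₁ T₂`; (iv) if (`U₁ ≼ T₁` and `U₂ ≼ T₂`) or (`U₁ ≼ T₂` and `U₂ ≼ T₁`) then
`node a U₁ U₂ ≼ node a T₁ T₂`.  (The disjunctive rules are split into two constructors each.) -/
inductive TopCont {Λ : Type} : LTree Λ → LTree Λ → Prop
  | leaf_leaf (a : Λ) : TopCont (.leaf a) (.leaf a)
  | leaf_node (a : Λ) (T₁ T₂ : LTree Λ) : TopCont (.leaf a) (.node a T₁ T₂)
  | subtree_left (U : LTree Λ) (b : Λ) (T₁ T₂ : LTree Λ) :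
      TopCont U T₁ → TopCont U (.node b T₁ T₂)
  | subtree_right (U : LTree Λ) (b : Λ) (T₁ T₂ : LTree Λ) :
      TopCont U T₂ → TopCont U (.node b T₁ T₂)
  | node_node (a : Λ) (U₁ U₂ T₁ T₂ : LTree Λ) :
      TopCont U₁ T₁ → TopCont U₂ T₂ → TopCont (.node a U₁ U₂) (.node a T₁ T₂)
  | node_node_swap (a : Λ) (U₁ U₂ T₁ T₂ : LTree Λ) :
      TopCont U₁ T₂ → TopCont U₂ T₁ → TopCont (.node a U₁ U₂) (.node a T₁ T₂)

/-- A deterministic bottom-up tree automaton over label set `Λ`. -/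
structure TreeAutomaton (Λ : Type) where
  State : Type
  fintypeState : Fintype State
  accept : Set State
  m0 : Λ → State
  m2 : Λ → State → State → State
  m2_comm : ∀ a s t, m2 a s t = m2 a t s

/-- The run of a tree automaton on a tree. -/
def TreeAutomaton.run {Λ : Type} (M : TreeAutomaton Λ) : LTree Λ → M.State
  | .leaf a => M.m0 a
  | .node a T₁ T₂ => M.m2 a (M.run T₁) (M.run T₂)

/-- A tree automaton accepts a tree if its run ends in an accepting state. -/
def TreeAutomaton.Accepts {Λ : Type} (M : TreeAutomaton Λ) (T : LTree Λ) : Prop :=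
  M.run T ∈ M.accept

/-- A set of trees is a regular tree language if some tree automaton accepts
exactly the trees in it. -/
def IsRegularTreeLang {Λ : Type} (L : Set (LTree Λ)) : Prop :=
  ∃ M : TreeAutomaton Λ, ∀ T, T ∈ L ↔ M.Accepts T

/-- Relabel a tree by applying `f` to every label. -/
def LTree.relabel {Λ Λ' : Type} (f : Λ → Λ') : LTree Λ → LTree Λ'
  | .leaf a => .leaf (f a)
  | .node a T₁ T₂ => .node (f a) (relabel f T₁) (relabel f T₂)

/-- `X # Y`: a root labeled `none` with child subtrees the `some`-relabelings of `X` and `Y`. -/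
def LTree.hash {Λ : Type} (X Y : LTree Λ) : LTree (Option Λ) :=
  .node none (X.relabel some) (Y.relabel some)

/-- `(X, Y)` is an `L`-semibad pair if no `Z ∈ L` topologically contains both `X` and `Y`. -/
def Semibad {Λ : Type} (L : Set (LTree Λ)) (X Y : LTree Λ) : Prop :=
  ¬ ∃ Z ∈ L, TopCont X Z ∧ TopCont Y Z

section Aux

variable {Λ : Type}

/-! ### Basic properties of `TopCont` -/

theorem TopCont.rfl : ∀ T : LTree Λ, TopCont T T
  | .leaf a => .leaf_leaf a
  | .node a T₁ T₂ => .node_node a T₁ T₂ T₁ T₂ (TopCont.rfl T₁) (TopCont.rfl T₂)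

theorem TopCont.trans' {U V W : LTree Λ} (h₁ : TopCont U V) (h₂ : TopCont V W) :
    TopCont U W := by
  induction h₂ generalizing U with
  | leaf_leaf a => exact h₁
  | leaf_node a T₁ T₂ => cases h₁; exact .leaf_node a T₁ T₂
  | subtree_left V b T₁ T₂ h ih => exact .subtree_left _ _ _ _ (ih h₁)
  | subtree_right V b T₁ T₂ h ih => exact .subtree_right _ _ _ _ (ih h₁)
  | node_node a V₁ V₂ T₁ T₂ hl hr ihl ihr =>
      cases h₁ with
      | leaf_node => exact .leaf_node ..
      | subtree_left U _ _ _ h => exact .subtree_left _ _ _ _ (ihl h)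
      | subtree_right U _ _ _ h => exact .subtree_right _ _ _ _ (ihr h)
      | node_node _ U₁ U₂ _ _ u1 u2 => exact .node_node _ _ _ _ _ (ihl u1) (ihr u2)
      | node_node_swap _ U₁ U₂ _ _ u1 u2 => exact .node_node_swap _ _ _ _ _ (ihr u1) (ihl u2)
  | node_node_swap a V₁ V₂ T₁ T₂ hl hr ihl ihr =>
      cases h₁ with
      | leaf_node => exact .leaf_node ..
      | subtree_left U _ _ _ h => exact .subtree_right _ _ _ _ (ihl h)
      | subtree_right U _ _ _ h => exact .subtree_left _ _ _ _ (ihr h)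
      | node_node _ U₁ U₂ _ _ u1 u2 => exact .node_node_swap _ _ _ _ _ (ihl u1) (ihr u2)
      | node_node_swap _ U₁ U₂ _ _ u1 u2 => exact .node_node _ _ _ _ _ (ihr u1) (ihl u2)

instance : IsRefl (LTree Λ) TopCont := ⟨TopCont.rfl⟩
instance : IsTrans (LTree Λ) TopCont := ⟨fun _ _ _ => TopCont.trans'⟩
instance : IsPreorder (LTree Λ) TopCont where
  refl := TopCont.rfl
  trans _ _ _ := TopCont.trans'

theorem TopCont.left_child (a : Λ) (T₁ T₂ : LTree Λ) : TopCont T₁ (.node a T₁ T₂) :=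
  .subtree_left _ _ _ _ (TopCont.rfl T₁)

theorem TopCont.right_child (a : Λ) (T₁ T₂ : LTree Λ) : TopCont T₂ (.node a T₁ T₂) :=
  .subtree_right _ _ _ _ (TopCont.rfl T₂)

/-- Size of a tree. -/
def LTree.size : LTree Λ → ℕ
  | .leaf _ => 1
  | .node _ T₁ T₂ => T₁.size + T₂.size + 1

/-! ### Kruskal's tree theorem for binary trees over a finite label set -/

theorem ltree_pwo [Finite Λ] :
    (Set.univ : Set (LTree Λ)).PartiallyWellOrderedOn TopCont := by
  classical
  rw [Set.PartiallyWellOrderedOn.iff_not_exists_isMinBadSeq LTree.size]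
  rintro ⟨f, hf, hmin⟩
  -- the set of children of terms of `f`
  set s₁ : Set (LTree Λ) :=
    {T | ∃ n a T₁ T₂, f n = .node a T₁ T₂ ∧ (T = T₁ ∨ T = T₂)} with hs₁def
  have child_cont : ∀ {T : LTree Λ}, T ∈ s₁ → ∃ n, TopCont T (f n) ∧
      LTree.size T < LTree.size (f n) := by
    rintro T ⟨n, a, T₁, T₂, hfn, hT⟩
    refine ⟨n, ?_, ?_⟩ <;> rw [hfn] <;> rcases hT with rfl | rfl
    · exact TopCont.left_child a T T₂
    · exact TopCont.right_child a T₁ T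
    · simp [LTree.size]
    · simp [LTree.size]
  -- the children set is partially well ordered
  have hs₁pwo : s₁.PartiallyWellOrderedOn TopCont := by
    rw [Set.PartiallyWellOrderedOn.iff_forall_not_isBadSeq]
    intro g hg
    -- parent indices
    have hpar : ∀ k, ∃ n, ∃ a T₁ T₂, f n = .node a T₁ T₂ ∧ (g k = T₁ ∨ g k = T₂) := hg.1
    have hparent : ∀ k, ∃ n, TopCont (g k) (f n) ∧ LTree.size (g k) < LTree.size (f n) :=
      fun k => child_cont (hg.1 k)
    -- the set of all parent indices
    have hNne : ∃ n, ∃ k, TopCont (g k) (f n) ∧ LTree.size (g k) < LTree.size (f n) := by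
      obtain ⟨n, hn⟩ := hparent 0; exact ⟨n, 0, hn⟩
    set n₀ := Nat.find hNne with hn₀def
    obtain ⟨k₀, hk₀⟩ := Nat.find_spec hNne
    have hmin' : ∀ k n, TopCont (g k) (f n) ∧ LTree.size (g k) < LTree.size (f n) → n₀ ≤ n :=
      fun k n h => Nat.find_le ⟨k, h⟩
    -- splice sequence
    set h : ℕ → LTree Λ := fun m => if m < n₀ then f m else g (k₀ + (m - n₀)) with hdef
    have hbad : Set.PartiallyWellOrderedOn.IsBadSeq TopCont Set.univ h := by
      refine ⟨fun _ => trivial, fun m n hmn hcont => ?_⟩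
      by_cases hn : n < n₀
      · simp only [hdef] at hcont
        rw [if_pos (hmn.trans hn), if_pos hn] at hcont
        exact hf.2 m n hmn hcont
      · by_cases hm : m < n₀
        · simp only [hdef] at hcont
          rw [if_pos hm, if_neg hn] at hcont
          obtain ⟨n', hn'1, hn'2⟩ := hparent (k₀ + (n - n₀))
          have : n₀ ≤ n' := hmin' _ _ ⟨hn'1, hn'2⟩
          exact hf.2 m n' (lt_of_lt_of_le hm this) (TopCont.trans' hcont hn'1)
        · simp only [hdef] at hcont
          rw [if_neg hm, if_neg hn] at hcont
          exact hg.2 _ _ (by omega) hcont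
    refine hmin n₀ h (fun m hm => by simp [hdef, if_pos hm]) ?_ hbad
    have : h n₀ = g k₀ := by simp [hdef]
    rw [this]
    obtain ⟨n', hn'1, hn'2⟩ := hparent k₀
    -- size (g k₀) < size (f n₀) :  n₀ is a minimal parent index and is a parent index of k₀
    exact lt_of_lt_of_le hk₀.2 le_rfl
  -- now handle the main sequence
  -- case 1: infinitely many leaves
  set A : Set ℕ := {n | ∃ a, f n = .leaf a} with hAdef
  by_cases hA : A.Infinite
  · haveI : Infinite A := Set.infinite_coe_iff.2 hA
    obtain ⟨x, y, hxy, hl⟩ := Finite.exists_ne_map_eq_of_infinite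
      (fun n : A => Classical.choose n.2)
    have hx : f x.1 = .leaf (Classical.choose x.2) := Classical.choose_spec x.2
    have hy : f y.1 = .leaf (Classical.choose y.2) := Classical.choose_spec y.2
    have hfxy : f x.1 = f y.1 := by rw [hx, hy, hl]
    have hne : (x : ℕ) ≠ (y : ℕ) := fun h => hxy (Subtype.ext h)
    rcases lt_or_gt_of_ne hne with h | h
    · exact hf.2 x y h (hfxy ▸ TopCont.rfl _)
    · exact hf.2 y x h (hfxy ▸ TopCont.rfl _)
  · -- case 2: eventually all nodes
    rw [Set.not_infinite] at hA
    obtain ⟨N, hN⟩ : ∃ N, ∀ n ∈ A, n < N := by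
      rcases hA.bddAbove with ⟨N, hN⟩
      exact ⟨N + 1, fun n hn => Nat.lt_succ_of_le (hN hn)⟩
    have hnode : ∀ n, ∃ a T₁ T₂, f (N + n) = .node a T₁ T₂ := by
      intro n
      cases hT : f (N + n) with
      | leaf a => exact absurd (hN (N + n) ⟨a, hT⟩) (by omega)
      | node a T₁ T₂ => exact ⟨a, T₁, T₂, rfl⟩
    choose lab l r hflr using hnode
    have hmem : ∀ n, (lab n, (l n, r n)) ∈ (Set.univ : Set Λ) ×ˢ (s₁ ×ˢ s₁) := by
      intro n
      refine ⟨trivial, ⟨N + n, lab n, l n, r n, hflr n, Or.inl rfl⟩,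
        ⟨N + n, lab n, l n, r n, hflr n, Or.inr rfl⟩⟩
    have hpwo3 : ((Set.univ : Set Λ) ×ˢ (s₁ ×ˢ s₁)).PartiallyWellOrderedOn
        (fun x y => x.1 = y.1 ∧ (TopCont x.2.1 y.2.1 ∧ TopCont x.2.2 y.2.2)) :=
      (Set.finite_univ.partiallyWellOrderedOn).prod (hs₁pwo.prod hs₁pwo)
    obtain ⟨m, n, hmn, hlab, hc1, hc2⟩ := hpwo3.exists_lt (f := fun n => (lab n, (l n, r n))) hmem
    refine hf.2 (N + m) (N + n) (by omega) ?_
    rw [hflr m, hflr n]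
    dsimp only at hlab hc1 hc2
    rw [hlab]
    exact .node_node _ _ _ _ _ hc1 hc2

/-- In a pwo, any set has a finite "generating" subset. -/
theorem exists_finset_generators {α : Type*} (R : α → α → Prop)
    (hpwo : (Set.univ : Set α).PartiallyWellOrderedOn R) (S : Set α) :
    ∃ gs : Finset α, ↑gs ⊆ S ∧ ∀ p ∈ S, ∃ q ∈ gs, R q p := by
  classical
  by_contra hcon
  push_neg at hcon
  choose pick hpickS hpick using fun (gs : Finset α) (h : ↑gs ⊆ S) => hcon gs h
  set F : ℕ → {gs : Finset α // ↑gs ⊆ S} :=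
    Nat.rec ⟨∅, by simp⟩ (fun _ Fn =>
      ⟨insert (pick Fn.1 Fn.2) Fn.1, by
        rw [Finset.coe_insert]
        exact Set.insert_subset (hpickS Fn.1 Fn.2) Fn.2⟩) with hFdef
  set g : ℕ → α := fun n => pick (F n).1 (F n).2 with hgdef
  have hstep : ∀ n, (F n).1 ⊆ (F (n+1)).1 := fun n => Finset.subset_insert _ _
  have hFmono : ∀ {m n : ℕ}, m ≤ n → (F m).1 ⊆ (F n).1 := by
    intro m n hmn
    induction hmn with
    | refl => exact fun x h => h
    | step _ ih => exact ih.trans (hstep _)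
  have hgmem : ∀ n, g n ∈ (F (n+1)).1 := fun n => Finset.mem_insert_self _ _
  obtain ⟨m, n, hmn, hR⟩ := hpwo.exists_lt (f := g) (fun _ => trivial)
  exact hpick (F n).1 (F n).2 (g m) (hFmono hmn (hgmem m)) hR

end Aux
section Automaton

variable {Λ : Type}

theorem LTree.relabel_some_inj : ∀ {X Y : LTree Λ},
    X.relabel some = Y.relabel some → X = Y := by
  intro X
  induction X with
  | leaf a => intro Y h; cases Y <;> simp [LTree.relabel] at h ⊢; exact h
  | node a X₁ X₂ ih₁ ih₂ =>
      intro Y h; cases Y <;> simp [LTree.relabel] at h ⊢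
      exact ⟨h.1, ih₁ h.2.1, ih₂ h.2.2⟩

attribute [local instance] Classical.propDecidable

/-- All subtrees of a tree, as a finset. -/
noncomputable def subtreesOf : LTree Λ → Finset (LTree Λ)
  | .leaf a => {.leaf a}
  | .node a T₁ T₂ => insert (.node a T₁ T₂) (subtreesOf T₁ ∪ subtreesOf T₂)

theorem self_mem_subtreesOf : ∀ T : LTree Λ, T ∈ subtreesOf T
  | .leaf a => by simp [subtreesOf]
  | .node a T₁ T₂ => by simp [subtreesOf]

theorem subtreesOf_closed : ∀ (T : LTree Λ) {a U₁ U₂},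
    LTree.node a U₁ U₂ ∈ subtreesOf T → U₁ ∈ subtreesOf T ∧ U₂ ∈ subtreesOf T := by
  intro T
  induction T with
  | leaf b => intro a U₁ U₂ h; simp [subtreesOf] at h
  | node b T₁ T₂ ih₁ ih₂ =>
      intro a U₁ U₂ h
      simp only [subtreesOf, Finset.mem_insert, Finset.mem_union] at h ⊢
      rcases h with h | h | h
      · obtain ⟨rfl, rfl, rfl⟩ : b = a ∧ T₁ = U₁ ∧ T₂ = U₂ := by
          injection h.symm with h1 h2 h3; exact ⟨h1, h2, h3⟩
        exact ⟨Or.inr (Or.inl (self_mem_subtreesOf _)),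
          Or.inr (Or.inr (self_mem_subtreesOf _))⟩
      · exact ⟨Or.inr (Or.inl (ih₁ h).1), Or.inr (Or.inl (ih₁ h).2)⟩
      · exact ⟨Or.inr (Or.inr (ih₂ h).1), Or.inr (Or.inr (ih₂ h).2)⟩

variable (gs : Finset (LTree Λ × LTree Λ))

/-- All subtrees of components of the generators. -/
noncomputable def subsOf : Finset (LTree Λ) :=
  gs.biUnion fun q => subtreesOf q.1 ∪ subtreesOf q.2

theorem subsOf_closed {a : Λ} {U₁ U₂ : LTree Λ} (h : LTree.node a U₁ U₂ ∈ subsOf gs) :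
    U₁ ∈ subsOf gs ∧ U₂ ∈ subsOf gs := by
  simp only [subsOf, Finset.mem_biUnion, Finset.mem_union] at h ⊢
  obtain ⟨q, hq, h | h⟩ := h
  · exact ⟨⟨q, hq, Or.inl (subtreesOf_closed _ h).1⟩, ⟨q, hq, Or.inl (subtreesOf_closed _ h).2⟩⟩
  · exact ⟨⟨q, hq, Or.inr (subtreesOf_closed _ h).1⟩, ⟨q, hq, Or.inr (subtreesOf_closed _ h).2⟩⟩

theorem gen_mem_subsOf {q : LTree Λ × LTree Λ} (hq : q ∈ gs) :
    q.1 ∈ subsOf gs ∧ q.2 ∈ subsOf gs := by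
  simp only [subsOf, Finset.mem_biUnion, Finset.mem_union]
  exact ⟨⟨q, hq, Or.inl (self_mem_subtreesOf _)⟩, ⟨q, hq, Or.inr (self_mem_subtreesOf _)⟩⟩

/-- The state space of the automaton. -/
abbrev St : Type := ({U : LTree Λ // U ∈ subsOf gs} → Prop) ⊕ Prop

/-- Extend a state function to all trees. -/
abbrev MF (f : {U : LTree Λ // U ∈ subsOf gs} → Prop) (U : LTree Λ) : Prop :=
  ∃ h : U ∈ subsOf gs, f ⟨U, h⟩

/-- One containment step at a binary node. -/
abbrev nodeStep (a : Λ) (f g : {U : LTree Λ // U ∈ subsOf gs} → Prop) (U : LTree Λ) : Prop :=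
  (match U with
   | .leaf b => b = a
   | .node b U₁ U₂ => b = a ∧ ((MF gs f U₁ ∧ MF gs g U₂) ∨ (MF gs f U₂ ∧ MF gs g U₁))) ∨
  MF gs f U ∨ MF gs g U

/-- The acceptance proposition at the root. -/
abbrev AccP (f g : {U : LTree Λ // U ∈ subsOf gs} → Prop) : Prop :=
  ∃ q ∈ gs, (MF gs f q.1 ∧ MF gs g q.2) ∨ (MF gs f q.2 ∧ MF gs g q.1)

def m2fun (a : Option Λ) : St gs → St gs → St gs
  | .inl f, .inl g =>
      match a with
      | some a' => .inl fun p => nodeStep gs a' f g p.1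
      | none => .inr (AccP gs f g)
  | .inl _, .inr _ => .inr False
  | .inr _, _ => .inr False

theorem m2fun_comm (a : Option Λ) (s t : St gs) : m2fun gs a s t = m2fun gs a t s := by
  rcases s with f | P <;> rcases t with g | Q
  · cases a with
    | some a' =>
        show Sum.inl _ = Sum.inl _
        refine congrArg _ (funext fun p => propext ?_)
        unfold nodeStep
        cases p.1 with
        | leaf b => dsimp only; tauto
        | node b U₁ U₂ => dsimp only; tauto
    | none =>
        show Sum.inr _ = Sum.inr _
        refine congrArg _ (propext ?_)
        unfold AccP
        constructor <;> rintro ⟨q, hq, h⟩ <;> exact ⟨q, hq, by tauto⟩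
  · rfl
  · rfl
  · rfl

/-- The automaton. -/
noncomputable def autM : TreeAutomaton (Option Λ) where
  State := St gs
  fintypeState := by infer_instance
  accept := {s | ∃ P : Prop, s = Sum.inr P ∧ P}
  m0 := fun a =>
    match a with
    | some a' => Sum.inl fun p => TopCont p.1 (.leaf a')
    | none => Sum.inr False
  m2 := m2fun gs
  m2_comm := m2fun_comm gs

theorem MF_can (X : LTree Λ) (V : LTree Λ) :
    MF gs (fun p => TopCont p.1 X) V ↔ V ∈ subsOf gs ∧ TopCont V X :=
  ⟨fun ⟨h, hh⟩ => ⟨h, hh⟩, fun ⟨h, hh⟩ => ⟨h, hh⟩⟩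

theorem nodeStep_can (a : Λ) (X₁ X₂ : LTree Λ) (U : LTree Λ) (hU : U ∈ subsOf gs) :
    nodeStep gs a (fun p => TopCont p.1 X₁) (fun p => TopCont p.1 X₂) U ↔
      TopCont U (.node a X₁ X₂) := by
  unfold nodeStep
  cases U with
  | leaf b =>
      dsimp only
      simp only [MF_can]
      constructor
      · rintro (rfl | ⟨_, h⟩ | ⟨_, h⟩)
        · exact .leaf_node ..
        · exact .subtree_left _ _ _ _ h
        · exact .subtree_right _ _ _ _ h
      · intro h
        cases h with
        | leaf_node => exact Or.inl rfl
        | subtree_left _ _ _ _ h => exact Or.inr (Or.inl ⟨hU, h⟩)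
        | subtree_right _ _ _ _ h => exact Or.inr (Or.inr ⟨hU, h⟩)
  | node b U₁ U₂ =>
      dsimp only
      simp only [MF_can]
      constructor
      · rintro (⟨rfl, ⟨⟨_, h1⟩, ⟨_, h2⟩⟩ | ⟨⟨_, h1⟩, ⟨_, h2⟩⟩⟩ | ⟨_, h⟩ | ⟨_, h⟩)
        · exact .node_node _ _ _ _ _ h1 h2
        · exact .node_node_swap _ _ _ _ _ h2 h1
        · exact .subtree_left _ _ _ _ h
        · exact .subtree_right _ _ _ _ h
      · intro h
        have hc := subsOf_closed gs hU
        cases h with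
        | subtree_left _ _ _ _ h => exact Or.inr (Or.inl ⟨hU, h⟩)
        | subtree_right _ _ _ _ h => exact Or.inr (Or.inr ⟨hU, h⟩)
        | node_node _ _ _ _ _ h1 h2 =>
            exact Or.inl ⟨rfl, Or.inl ⟨⟨hc.1, h1⟩, ⟨hc.2, h2⟩⟩⟩
        | node_node_swap _ _ _ _ _ h1 h2 =>
            exact Or.inl ⟨rfl, Or.inr ⟨⟨hc.2, h2⟩, ⟨hc.1, h1⟩⟩⟩

theorem run_relabel (X : LTree Λ) :
    (autM gs).run (X.relabel some) = Sum.inl fun p => TopCont p.1 X := by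
  induction X with
  | leaf a => rfl
  | node a X₁ X₂ ih₁ ih₂ =>
      show (autM gs).m2 (some a) ((autM gs).run (X₁.relabel some))
        ((autM gs).run (X₂.relabel some)) = _
      rw [ih₁, ih₂]
      show Sum.inl _ = Sum.inl _
      refine congrArg _ (funext fun p => propext ?_)
      exact nodeStep_can gs a X₁ X₂ p.1 p.2

theorem run_inl : ∀ (T : LTree (Option Λ)) (f), (autM gs).run T = Sum.inl f →
    ∃ X : LTree Λ, T = X.relabel some := by
  intro T
  induction T with
  | leaf a =>
      intro f h
      cases a with
      | some a' => exact ⟨.leaf a', rfl⟩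
      | none => exact absurd h (by simp [autM, TreeAutomaton.run])
  | node a T₁ T₂ ih₁ ih₂ =>
      intro f h
      have hrun : (autM gs).run (.node a T₁ T₂)
          = m2fun gs a ((autM gs).run T₁) ((autM gs).run T₂) := rfl
      rw [hrun] at h
      rcases h₁ : (autM gs).run T₁ with f₁ | P₁ <;>
        rcases h₂ : (autM gs).run T₂ with f₂ | P₂ <;> rw [h₁, h₂] at h
      · cases a with
        | some a' =>
            obtain ⟨X₁, rfl⟩ := ih₁ _ h₁
            obtain ⟨X₂, rfl⟩ := ih₂ _ h₂
            exact ⟨.node a' X₁ X₂, rfl⟩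
        | none => exact absurd h (by simp [m2fun])
      · exact absurd h (by simp [m2fun])
      · exact absurd h (by simp [m2fun])
      · exact absurd h (by simp [m2fun])

/-- Acceptance condition in terms of the generators. -/
abbrev AccCond (X Y : LTree Λ) : Prop :=
  ∃ q ∈ gs, (TopCont q.1 X ∧ TopCont q.2 Y) ∨ (TopCont q.1 Y ∧ TopCont q.2 X)

theorem accept_inr {P : Prop} : (Sum.inr P ∈ (autM gs).accept) ↔ P := by
  constructor
  · rintro ⟨Q, hQ, h⟩
    rw [show P = Q from Sum.inr.inj hQ]
    exact h
  · intro h; exact ⟨P, rfl, h⟩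

theorem accept_not_inl {f} : Sum.inl f ∉ (autM gs).accept := by
  rintro ⟨Q, hQ, h⟩
  exact Sum.inl_ne_inr hQ

theorem accepts_iff (W : LTree (Option Λ)) :
    (autM gs).Accepts W ↔ ∃ X Y : LTree Λ, W = LTree.hash X Y ∧ AccCond gs X Y := by
  unfold TreeAutomaton.Accepts
  cases W with
  | leaf a =>
      have : ∀ X Y : LTree Λ, LTree.leaf a ≠ LTree.hash X Y := by
        intro X Y h; simp [LTree.hash] at h
      simp only [this, false_and, exists_false, iff_false]
      cases a with
      | some a' => exact accept_not_inl gs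
      | none => rw [show (autM gs).run (.leaf none) = Sum.inr False from rfl]; exact (accept_inr gs).1
  | node c T₁ T₂ =>
      have hrun : (autM gs).run (.node c T₁ T₂)
          = m2fun gs c ((autM gs).run T₁) ((autM gs).run T₂) := rfl
      rw [hrun]
      rcases h₁ : (autM gs).run T₁ with f₁ | P₁ <;>
        rcases h₂ : (autM gs).run T₂ with f₂ | P₂
      · -- both children are relabelings
        obtain ⟨X, rfl⟩ := run_inl gs _ _ h₁
        obtain ⟨Y, rfl⟩ := run_inl gs _ _ h₂
        rw [run_relabel] at h₁ h₂
        have hf₁ : f₁ = fun p => TopCont p.1 X := (Sum.inl.inj h₁).symm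
        have hf₂ : f₂ = fun p => TopCont p.1 Y := (Sum.inl.inj h₂).symm
        cases c with
        | some c' =>
            simp only [m2fun]
            constructor
            · intro h; exact absurd h (accept_not_inl gs)
            · rintro ⟨X', Y', h, -⟩
              exact absurd (LTree.node.inj h).1 (Option.some_ne_none _)
        | none =>
            have hred : m2fun gs none (Sum.inl f₁) (Sum.inl f₂) = Sum.inr (AccP gs f₁ f₂) :=
              rfl
            rw [hred]; refine (accept_inr gs).trans ?_; rw [hf₁, hf₂]
            constructor
            · rintro ⟨q, hq, h⟩
              refine ⟨X, Y, rfl, q, hq, ?_⟩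
              simp only [MF_can] at h
              tauto
            · rintro ⟨X', Y', heq, q, hq, h⟩
              obtain ⟨-, e1, e2⟩ := LTree.node.inj heq
              obtain rfl := LTree.relabel_some_inj e1
              obtain rfl := LTree.relabel_some_inj e2
              refine ⟨q, hq, ?_⟩
              have h1 := (gen_mem_subsOf gs hq).1
              have h2 := (gen_mem_subsOf gs hq).2
              simp only [MF_can]
              tauto
      · refine iff_of_false ?_ ?_
        · cases c <;> simp only [m2fun] <;>
            first
              | exact accept_not_inl gs
              | exact (accept_inr gs).1
        · rintro ⟨X, Y, heq, -⟩
          obtain ⟨-, e1, e2⟩ := LTree.node.inj heq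
          rw [e2, run_relabel] at h₂
          exact Sum.inl_ne_inr h₂
      · refine iff_of_false ?_ ?_
        · cases c <;> simp only [m2fun] <;>
            first
              | exact accept_not_inl gs
              | exact (accept_inr gs).1
        · rintro ⟨X, Y, heq, -⟩
          obtain ⟨-, e1, e2⟩ := LTree.node.inj heq
          rw [e1, run_relabel] at h₁
          exact Sum.inl_ne_inr h₁
      · refine iff_of_false ?_ ?_
        · simp only [m2fun]; exact (accept_inr gs).1
        · rintro ⟨X, Y, heq, -⟩
          obtain ⟨-, e1, e2⟩ := LTree.node.inj heq
          rw [e1, run_relabel] at h₁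
          exact Sum.inl_ne_inr h₁

end Automaton
/-- for ANY set `L` of trees over a finite label set `Λ` (not assumed regular),
the language `B_L' = { X # Y | (X, Y) is an L-semibad pair }` is regular over `Option Λ`. -/
theorem semibad_pairs_regular_of_any {Λ : Type} [Fintype Λ] (L : Set (LTree Λ)) :
    IsRegularTreeLang {W : LTree (Option Λ) |
      ∃ X Y : LTree Λ, Semibad L X Y ∧ W = LTree.hash X Y} := by
  classical
  have hpwo : (Set.univ : Set (LTree Λ × LTree Λ)).PartiallyWellOrderedOn
      (fun p q => TopCont p.1 q.1 ∧ TopCont p.2 q.2) := by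
    have := (ltree_pwo (Λ := Λ)).prod (ltree_pwo (Λ := Λ))
    rwa [Set.univ_prod_univ] at this
  obtain ⟨gs, hgsS, hgen⟩ := exists_finset_generators _ hpwo {p | Semibad L p.1 p.2}
  refine ⟨autM gs, fun W => ?_⟩
  rw [accepts_iff]
  constructor
  · rintro ⟨X, Y, hsb, rfl⟩
    obtain ⟨q, hq, hR⟩ := hgen (X, Y) hsb
    exact ⟨X, Y, rfl, q, hq, Or.inl hR⟩
  · rintro ⟨X, Y, rfl, q, hq, h⟩
    have hqsb : Semibad L q.1 q.2 := hgsS hq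
    refine ⟨X, Y, ?_, rfl⟩
    rcases h with ⟨h1, h2⟩ | ⟨h1, h2⟩
    · rintro ⟨Z, hZ, hXZ, hYZ⟩
      exact hqsb ⟨Z, hZ, TopCont.trans' h1 hXZ, TopCont.trans' h2 hYZ⟩
    · rintro ⟨Z, hZ, hXZ, hYZ⟩
      exact hqsb ⟨Z, hZ, TopCont.trans' h1 hYZ, TopCont.trans' h2 hXZ⟩
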